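/- Let α ∈ (0,1), 0 < a < b, and r : [a,b] → ℝ be α-differentiable with continuous α-derivative. If r^(α)(t) < 0 for every t ∈ [a,b] with r(t) > 0, and r(a) ≤ 0, then r(t) ≤ 0 for every t ∈ [a,b]. -/

import Mathlib

open Filter Real Set

/-- The conformable fractional derivative of `f` of order `α` at `t`,
`T_α(f)(t) = lim_{ε→0} (f(t + ε t^(1-α)) - f t)/ε = L`. -/
def HasConformableDerivAt (α : ℝ) (f : ℝ → ℝ) (t L : ℝ) : Prop :=
  Tendsto (fun ε : ℝ => (f (t + ε * t ^ (1 - α)) - f t) / ε)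
    (nhdsWithin 0 {(0 : ℝ)}ᶜ) (nhds L)

open Topology in
lemma conf_to_deriv {α : ℝ} {r : ℝ → ℝ} {t L : ℝ} (ht : 0 < t)
    (h : HasConformableDerivAt α r t L) : HasDerivAt r (L * t ^ (α - 1)) t := by
  set c := t ^ (1 - α) with hc
  have hcpos : 0 < c := rpow_pos_of_pos ht _
  have hcne : c ≠ 0 := ne_of_gt hcpos
  have hinv : t ^ (α - 1) = c⁻¹ := by
    rw [hc, ← rpow_neg ht.le, neg_sub]
  have hφ : Tendsto (fun y => (y - t) / c) (𝓝[≠] t) (𝓝[≠] (0:ℝ)) := by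
    apply tendsto_nhdsWithin_of_tendsto_nhds_of_eventually_within
    · have : Tendsto (fun y => (y - t) / c) (𝓝 t) (𝓝 ((t - t) / c)) := by
        exact (tendsto_id.sub tendsto_const_nhds).div_const c
      simpa using this.mono_left nhdsWithin_le_nhds
    · filter_upwards [self_mem_nhdsWithin] with y hy
      simp only [mem_compl_iff, mem_singleton_iff] at hy ⊢
      intro h0
      apply hy
      have := div_eq_zero_iff.mp h0
      rcases this with h1 | h1
      · linarith [sub_eq_zero.mp h1]
      · exact absurd h1 hcne
  have h2 := h.comp hφ
  have h3 : Tendsto (fun y => slope r t y * c) (𝓝[≠] t) (𝓝 L) := by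
    apply h2.congr'
    filter_upwards [self_mem_nhdsWithin] with y hy
    simp only [mem_compl_iff, mem_singleton_iff] at hy
    have hyt : y - t ≠ 0 := sub_ne_zero.mpr hy
    simp only [Function.comp]
    rw [div_mul_cancel₀ _ hcne]
    rw [slope_def_field]
    field_simp
    simp
  have h4 : Tendsto (slope r t) (𝓝[≠] t) (𝓝 (L / c)) := by
    have := h3.div_const c
    apply this.congr
    intro y
    rw [mul_div_cancel_right₀ _ hcne]
  rw [hasDerivAt_iff_tendsto_slope, hinv, mul_comm, ← div_eq_inv_mul]
  exact h4

theorem stmt5 (α a b : ℝ) (hα : α ∈ Set.Ioo (0:ℝ) 1) (ha : 0 < a) (hab : a < b)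
    (r r' : ℝ → ℝ)
    (hdiff : ∀ t ∈ Set.Icc a b, HasConformableDerivAt α r t (r' t))
    (hcont : ContinuousOn r' (Set.Icc a b))
    (hneg : ∀ t ∈ Set.Icc a b, 0 < r t → r' t < 0)
    (hra : r a ≤ 0) :
    ∀ t ∈ Set.Icc a b, r t ≤ 0 := by
  have hD : ∀ t ∈ Set.Icc a b, HasDerivAt r (r' t * t ^ (α - 1)) t := fun t ht =>
    conf_to_deriv (lt_of_lt_of_le ha ht.1) (hdiff t ht)
  have hrc : ContinuousOn r (Set.Icc a b) := fun t ht =>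
    (hD t ht).continuousAt.continuousWithinAt
  by_contra hcon
  push_neg at hcon
  obtain ⟨t0, ht0, hrt0⟩ := hcon
  set S := Set.Icc a t0 ∩ r ⁻¹' (Set.Iic 0) with hS
  have hsub : Set.Icc a t0 ⊆ Set.Icc a b := Set.Icc_subset_Icc le_rfl ht0.2
  have hScl : IsClosed S :=
    ContinuousOn.preimage_isClosed_of_isClosed (hrc.mono hsub) isClosed_Icc isClosed_Iic
  have haS : a ∈ S := ⟨⟨le_rfl, ht0.1⟩, hra⟩
  have hbdd : BddAbove S := ⟨t0, fun x hx => hx.1.2⟩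
  set s := sSup S with hs
  have hsS : s ∈ S := hScl.csSup_mem ⟨a, haS⟩ hbdd
  have has : a ≤ s := hsS.1.1
  have hst0 : s ≤ t0 := hsS.1.2
  have hrs : r s ≤ 0 := hsS.2
  have hsne : s ≠ t0 := fun h => by rw [h] at hrs; linarith
  have hslt : s < t0 := lt_of_le_of_ne hst0 hsne
  have key : ∀ u ∈ Set.Ioc s t0, 0 < r u := by
    intro u hu
    by_contra h
    push_neg at h
    have huS : u ∈ S := ⟨⟨has.trans hu.1.le, hu.2⟩, h⟩
    exact absurd (le_csSup hbdd huS) (not_le.mpr hu.1)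
  have hsub2 : Set.Icc s t0 ⊆ Set.Icc a b := Set.Icc_subset_Icc has ht0.2
  have hanti : StrictAntiOn r (Set.Icc s t0) := by
    apply strictAntiOn_of_deriv_neg (convex_Icc s t0) (hrc.mono hsub2)
    intro x hx
    rw [interior_Icc] at hx
    have hxab : x ∈ Set.Icc a b := hsub2 ⟨hx.1.le, hx.2.le⟩
    have hxpos : 0 < x := lt_of_lt_of_le ha hxab.1
    rw [(hD x hxab).deriv]
    exact mul_neg_of_neg_of_pos (hneg x hxab (key x ⟨hx.1, hx.2.le⟩))
      (rpow_pos_of_pos hxpos _)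
  have := hanti ⟨le_rfl, hst0⟩ ⟨hst0, le_rfl⟩ hslt
  linarith
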